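/- arXiv:1802.09505 — 4 statements merged into one kernel-verified Lean document; each statement's English description precedes it below -/
import Mathlib

section
/- If two closed disks of radii r_1 and r_2 intersect in more than one point, and together they cover an interval of length L on a line, then there exist radii r_1' < r_1 and r_2' < r_2 with 2r_1' + 2r_2' ≥ L. Consequently, an optimal (minimum total area) covering of an interval by disks contains no two overlapping disks. -/
/-- The embedding of the x-axis into the Euclidean plane. -/
noncomputable def pt (x : ℝ) : EuclideanSpace ℝ (Fin 2) :=
  (WithLp.equiv 2 (Fin 2 → ℝ)).symm ![x, 0]

lemma pt_mem_closedBall {x r : ℝ} {q : EuclideanSpace ℝ (Fin 2)} (hr : 0 ≤ r) :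
    pt x ∈ Metric.closedBall q r ↔ (x - q 0)^2 + (q 1)^2 ≤ r^2 := by
  rw [Metric.mem_closedBall, EuclideanSpace.dist_eq, Fin.sum_univ_two]
  have h0 : pt x 0 = x := rfl
  have h1 : pt x 1 = 0 := rfl
  rw [h0, h1, Real.dist_eq, Real.dist_eq, sq_abs, sq_abs]
  rw [show (0 - q 1)^2 = (q 1)^2 by ring]
  rw [show r = Real.sqrt (r^2) from (Real.sqrt_sq hr).symm,
    Real.sqrt_le_sqrt_iff (by positivity)]
  rw [Real.sqrt_sq hr]

lemma abs_sub_coord_le (u v : EuclideanSpace ℝ (Fin 2)) : |u 0 - v 0| ≤ dist u v := by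
  rw [EuclideanSpace.dist_eq, Fin.sum_univ_two, ← Real.sqrt_sq_eq_abs,
    Real.dist_eq, Real.dist_eq, sq_abs, sq_abs]
  exact Real.sqrt_le_sqrt (by nlinarith [sq_nonneg (u 1 - v 1)])

lemma overlap_facts {q1 q2 : EuclideanSpace ℝ (Fin 2)} {r1 r2 : ℝ}
    (h : ∃ x y : EuclideanSpace ℝ (Fin 2), x ≠ y ∧
        x ∈ Metric.closedBall q1 r1 ∩ Metric.closedBall q2 r2 ∧
        y ∈ Metric.closedBall q1 r1 ∩ Metric.closedBall q2 r2) :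
    0 < r1 ∧ 0 < r2 ∧ dist q1 q2 < r1 + r2 := by
  obtain ⟨x, y, hxy, ⟨hx1, hx2⟩, ⟨hy1, hy2⟩⟩ := h
  simp only [Metric.mem_closedBall] at hx1 hx2 hy1 hy2
  have hdxy : 0 < dist x y := dist_pos.2 hxy
  have hr1 : 0 < r1 := by
    have h1 : dist x y ≤ dist x q1 + dist q1 y := dist_triangle x q1 y
    rw [dist_comm q1 y] at h1; linarith
  have hr2 : 0 < r2 := by
    have h1 : dist x y ≤ dist x q2 + dist q2 y := dist_triangle x q2 y
    rw [dist_comm q2 y] at h1; linarith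
  refine ⟨hr1, hr2, ?_⟩
  by_contra hcon
  push_neg at hcon
  have hdpos : 0 < dist q1 q2 := lt_of_lt_of_le (by linarith) hcon
  have key : ∀ z : EuclideanSpace ℝ (Fin 2), dist z q1 ≤ r1 → dist z q2 ≤ r2 →
      z = AffineMap.lineMap q1 q2 (r1 / dist q1 q2) := by
    intro z hz1 hz2
    have htri : dist q1 q2 ≤ dist q1 z + dist z q2 := dist_triangle _ _ _
    rw [dist_comm z q1] at hz1
    have he : dist q1 z + dist z q2 = dist q1 q2 := le_antisymm (by linarith) htri
    have hw : Wbtw ℝ q1 z q2 := dist_add_dist_eq_iff.1 he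
    obtain ⟨t, ht, hzeq⟩ := hw
    have hdl : dist q1 (AffineMap.lineMap q1 q2 t) = ‖t‖ * dist q1 q2 :=
      dist_left_lineMap q1 q2 t
    have he1 : dist q1 z = r1 := by linarith
    rw [← hzeq] at he1
    rw [hdl, Real.norm_of_nonneg ht.1] at he1
    have hT : t = r1 / dist q1 q2 := by field_simp; linarith
    rw [← hzeq, hT]
  have := (key x hx1 hx2).trans (key y hy1 hy2).symm
  exact hxy this

lemma cover_aux (a b c1 w1 c2 w2 : ℝ) (hw2 : 0 ≤ w2) (hab : a ≤ b)
    (hcov : ∀ x, a ≤ x → x ≤ b → |x - c1| ≤ w1 ∨ |x - c2| ≤ w2)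
    (ha : |a - c1| ≤ w1) : b - a ≤ 2*w1 + 2*w2 := by
  rw [abs_le] at ha
  by_cases hb : b ≤ c1 + w1
  · linarith [ha.1, ha.2]
  push_neg at hb
  have hta : a ≤ c1 + w1 := by linarith [ha.2]
  have hclaim : c2 - w2 ≤ c1 + w1 := by
    by_contra hcl
    push_neg at hcl
    have hx1 : c1 + w1 < min b ((c1 + w1 + (c2 - w2))/2) := lt_min hb (by linarith)
    rcases hcov (min b ((c1 + w1 + (c2 - w2))/2)) (le_trans hta hx1.le) (min_le_left _ _)
      with h | h
    · rw [abs_le] at h; linarith [h.2]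
    · rw [abs_le] at h
      have := min_le_right b ((c1 + w1 + (c2 - w2))/2)
      linarith [h.1]
  have hbb : |b - c2| ≤ w2 := by
    rcases hcov b hab le_rfl with h | h
    · rw [abs_le] at h; linarith [h.2]
    · exact h
  rw [abs_le] at hbb
  linarith [ha.1, hbb.1, hbb.2]

lemma cover_two (a b c1 w1 c2 w2 : ℝ) (hw1 : 0 ≤ w1) (hw2 : 0 ≤ w2) (hab : a ≤ b)
    (hcov : ∀ x, a ≤ x → x ≤ b → |x - c1| ≤ w1 ∨ |x - c2| ≤ w2) :
    b - a ≤ 2*w1 + 2*w2 := by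
  rcases hcov a le_rfl hab with h | h
  · exact cover_aux a b c1 w1 c2 w2 hw2 hab hcov h
  · have := cover_aux a b c2 w2 c1 w1 hw1 hab
      (fun x hx1 hx2 => (hcov x hx1 hx2).symm) h
    linarith

lemma wsq_le {r h : ℝ} : Real.sqrt (r^2 - h^2) ^ 2 ≤ r^2 := by
  rcases le_or_gt 0 (r^2 - h^2) with h' | h'
  · rw [Real.sq_sqrt h']; nlinarith [sq_nonneg h]
  · rw [Real.sqrt_eq_zero_of_nonpos h'.le]; nlinarith [sq_nonneg r]

lemma wsq_lt {r h : ℝ} (hr : 0 < r) (hh : h ≠ 0) : Real.sqrt (r^2 - h^2) ^ 2 < r^2 := by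
  rcases le_or_gt 0 (r^2 - h^2) with h' | h'
  · rw [Real.sq_sqrt h']
    have : 0 < h^2 := by positivity
    linarith
  · rw [Real.sqrt_eq_zero_of_nonpos h'.le]; nlinarith

lemma w_le {r h : ℝ} (hr : 0 < r) : Real.sqrt (r^2 - h^2) ≤ r := by
  nlinarith [wsq_le (r := r) (h := h), Real.sqrt_nonneg (r^2 - h^2)]

lemma abs_le_w {x c r h : ℝ} (hx : (x - c)^2 + h^2 ≤ r^2) :
    |x - c| ≤ Real.sqrt (r^2 - h^2) := by
  rw [← Real.sqrt_sq_eq_abs]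
  exact Real.sqrt_le_sqrt (by nlinarith)

lemma key1 (q1 q2 : EuclideanSpace ℝ (Fin 2)) (r1 r2 a L : ℝ) (hL : 0 ≤ L)
    (hover : ∃ x y : EuclideanSpace ℝ (Fin 2), x ≠ y ∧
        x ∈ Metric.closedBall q1 r1 ∩ Metric.closedBall q2 r2 ∧
        y ∈ Metric.closedBall q1 r1 ∩ Metric.closedBall q2 r2)
    (hcov : ∀ x : ℝ, a ≤ x → x ≤ a + L →
        pt x ∈ Metric.closedBall q1 r1 ∪ Metric.closedBall q2 r2) :
    L < 2*r1 + 2*r2 := by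
  obtain ⟨hr1, hr2, hd⟩ := overlap_facts hover
  have hcov' : ∀ x : ℝ, a ≤ x → x ≤ a + L →
      (x - q1 0)^2 + (q1 1)^2 ≤ r1^2 ∨ (x - q2 0)^2 + (q2 1)^2 ≤ r2^2 := by
    intro x hx1 hx2
    rcases hcov x hx1 hx2 with h | h
    · exact Or.inl ((pt_mem_closedBall hr1.le).1 h)
    · exact Or.inr ((pt_mem_closedBall hr2.le).1 h)
  by_cases hzero : q1 1 = 0 ∧ q2 1 = 0
  · obtain ⟨hz1, hz2⟩ := hzero
    have habs : |q1 0 - q2 0| < r1 + r2 := lt_of_le_of_lt (abs_sub_coord_le q1 q2) hd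
    rw [abs_lt] at habs
    have hA := hcov' a le_rfl (by linarith)
    have hB := hcov' (a + L) (by linarith) le_rfl
    rw [hz1, hz2] at hA hB
    have sq1 : ∀ x : ℝ, (x - q1 0)^2 + (0:ℝ)^2 ≤ r1^2 → q1 0 - r1 ≤ x ∧ x ≤ q1 0 + r1 := by
      intro x hx
      constructor <;> nlinarith [sq_nonneg (x - q1 0 - r1), sq_nonneg (x - q1 0 + r1)]
    have sq2 : ∀ x : ℝ, (x - q2 0)^2 + (0:ℝ)^2 ≤ r2^2 → q2 0 - r2 ≤ x ∧ x ≤ q2 0 + r2 := by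
      intro x hx
      constructor <;> nlinarith [sq_nonneg (x - q2 0 - r2), sq_nonneg (x - q2 0 + r2)]
    rcases hA with h | h <;> rcases hB with h' | h'
    · linarith [(sq1 a h).1, (sq1 (a+L) h').2]
    · linarith [(sq1 a h).1, (sq2 (a+L) h').2]
    · linarith [(sq2 a h).1, (sq1 (a+L) h').2]
    · linarith [(sq2 a h).1, (sq2 (a+L) h').2]
  · set w1 := Real.sqrt (r1^2 - (q1 1)^2) with hw1def
    set w2 := Real.sqrt (r2^2 - (q2 1)^2) with hw2def
    have hcw : ∀ x, a ≤ x → x ≤ a + L → |x - q1 0| ≤ w1 ∨ |x - q2 0| ≤ w2 :=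
      fun x hx1 hx2 => (hcov' x hx1 hx2).imp abs_le_w abs_le_w
    have hle := cover_two a (a+L) (q1 0) w1 (q2 0) w2 (Real.sqrt_nonneg _)
      (Real.sqrt_nonneg _) (by linarith) hcw
    have hwle1 : w1 ≤ r1 := w_le hr1
    have hwle2 : w2 ≤ r2 := w_le hr2
    rcases not_and_or.1 hzero with h | h
    · have : w1 < r1 := by
        nlinarith [wsq_lt hr1 h, Real.sqrt_nonneg (r1^2 - (q1 1)^2)]
      linarith
    · have : w2 < r2 := by
        nlinarith [wsq_lt hr2 h, Real.sqrt_nonneg (r2^2 - (q2 1)^2)]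
      linarith

lemma replace_two {n : ℕ} (i j : Fin n) (hij : i ≠ j) (r r' : Fin n → ℝ)
    (hsame : ∀ k, k ≠ i → k ≠ j → r' k = r k)
    (hlt : r' i ^2 + r' j ^2 < r i ^2 + r j ^2) :
    ∑ k, r' k ^2 < ∑ k, r k ^2 := by
  classical
  have hji : j ∈ Finset.univ.erase i := Finset.mem_erase.2 ⟨hij.symm, Finset.mem_univ j⟩
  have e : ∀ f : Fin n → ℝ,
      ∑ k, f k = f i + (f j + ∑ k ∈ (Finset.univ.erase i).erase j, f k) := by
    intro f
    rw [Finset.add_sum_erase _ f hji, Finset.add_sum_erase _ f (Finset.mem_univ i)]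
  rw [e (fun k => r' k ^2), e (fun k => r k ^2)]
  have hT : ∑ k ∈ (Finset.univ.erase i).erase j, r' k ^2
      = ∑ k ∈ (Finset.univ.erase i).erase j, r k ^2 :=
    Finset.sum_congr rfl fun k hk => by
      rw [Finset.mem_erase, Finset.mem_erase] at hk
      rw [hsame k hk.2.1 hk.1]
  linarith

set_option maxHeartbeats 2000000 in
theorem stmt6 :
    (∀ (q1 q2 : EuclideanSpace ℝ (Fin 2)) (r1 r2 a L : ℝ), 0 ≤ L →
      (∃ x y : EuclideanSpace ℝ (Fin 2), x ≠ y ∧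
        x ∈ Metric.closedBall q1 r1 ∩ Metric.closedBall q2 r2 ∧
        y ∈ Metric.closedBall q1 r1 ∩ Metric.closedBall q2 r2) →
      (∀ x : ℝ, a ≤ x → x ≤ a + L →
        pt x ∈ Metric.closedBall q1 r1 ∪ Metric.closedBall q2 r2) →
      ∃ r1' r2' : ℝ, r1' < r1 ∧ r2' < r2 ∧ L ≤ 2 * r1' + 2 * r2') ∧
    (∀ (n : ℕ) (a L : ℝ), 0 < L →
      ∀ (q : Fin n → EuclideanSpace ℝ (Fin 2)) (r : Fin n → ℝ),
      (∀ i, 0 ≤ r i) →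
      (∀ x : ℝ, a ≤ x → x ≤ a + L → ∃ i, pt x ∈ Metric.closedBall (q i) (r i)) →
      (∀ (q' : Fin n → EuclideanSpace ℝ (Fin 2)) (r' : Fin n → ℝ),
        (∀ i, 0 ≤ r' i) →
        (∀ x : ℝ, a ≤ x → x ≤ a + L → ∃ i, pt x ∈ Metric.closedBall (q' i) (r' i)) →
        ∑ i, r i ^ 2 ≤ ∑ i, r' i ^ 2) →
      ∀ i j : Fin n, i ≠ j →
        ¬ ∃ x y : EuclideanSpace ℝ (Fin 2), x ≠ y ∧
          x ∈ Metric.closedBall (q i) (r i) ∩ Metric.closedBall (q j) (r j) ∧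
          y ∈ Metric.closedBall (q i) (r i) ∩ Metric.closedBall (q j) (r j)) := by
  constructor
  · intro q1 q2 r1 r2 a L hL hover hcov
    have hkey := key1 q1 q2 r1 r2 a L hL hover hcov
    refine ⟨r1 - (2*r1 + 2*r2 - L)/4, r2 - (2*r1 + 2*r2 - L)/4, by linarith, by linarith,
      by linarith⟩
  · intro n a L hL q r hr hcov hopt i j hij hover
    classical
    obtain ⟨hri, hrj, hd⟩ := overlap_facts hover
    have habs : |q i 0 - q j 0| < r i + r j :=
      lt_of_le_of_lt (abs_sub_coord_le (q i) (q j)) hd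
    rw [abs_lt] at habs
    by_cases hzero : q i 1 = 0 ∧ q j 1 = 0
    · -- both centers on the axis; replace by two quarter-disks
      obtain ⟨hzi, hzj⟩ := hzero
      set m := min (q i 0 - r i) (q j 0 - r j) with hm
      set M := max (q i 0 + r i) (q j 0 + r j) with hM
      have hmM : m ≤ M := le_trans (min_le_left _ _)
        (le_trans (by linarith) (le_max_left _ _))
      set ρ := (M - m)/4 with hρdef
      have hρ : 0 ≤ ρ := by simp only [hρdef]; linarith
      set q' : Fin n → EuclideanSpace ℝ (Fin 2) :=
        fun k => if k = i then pt (m + ρ) else if k = j then pt (M - ρ) else q k with hq'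
      set r' : Fin n → ℝ := fun k => if k = i then ρ else if k = j then ρ else r k with hr'
      have hr'nn : ∀ k, 0 ≤ r' k := by
        intro k; simp only [hr']; split_ifs
        exacts [hρ, hρ, hr k]
      have hr'i : r' i = ρ := by simp [hr']
      have hr'j : r' j = ρ := by simp [hr', hij.symm]
      have hMm : M - m < 2*(r i + r j) := by
        rcases max_cases (q i 0 + r i) (q j 0 + r j) with ⟨h1, _⟩ | ⟨h1, _⟩ <;>
          rcases min_cases (q i 0 - r i) (q j 0 - r j) with ⟨h2, _⟩ | ⟨h2, _⟩ <;>
          linarith [hM.trans h1, hm.trans h2, habs.1, habs.2]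
      have hcov' : ∀ x : ℝ, a ≤ x → x ≤ a + L →
          ∃ k, pt x ∈ Metric.closedBall (q' k) (r' k) := by
        intro x hx1 hx2
        obtain ⟨k, hk⟩ := hcov x hx1 hx2
        have hcase : m ≤ x ∧ x ≤ M → ∃ k, pt x ∈ Metric.closedBall (q' k) (r' k) := by
          rintro ⟨hxm, hxM⟩
          have h4ρ : 4*ρ = M - m := by rw [hρdef]; ring
          by_cases hhalf : x ≤ m + 2*ρ
          · refine ⟨i, ?_⟩
            have : q' i = pt (m + ρ) := by simp [hq']
            rw [this, hr'i, pt_mem_closedBall hρ]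
            have e0 : (pt (m + ρ) : EuclideanSpace ℝ (Fin 2)) 0 = m + ρ := rfl
            have e1 : (pt (m + ρ) : EuclideanSpace ℝ (Fin 2)) 1 = 0 := rfl
            rw [e0, e1]
            nlinarith
          · refine ⟨j, ?_⟩
            have : q' j = pt (M - ρ) := by simp [hq', hij.symm]
            rw [this, hr'j, pt_mem_closedBall hρ]
            have e0 : (pt (M - ρ) : EuclideanSpace ℝ (Fin 2)) 0 = M - ρ := rfl
            have e1 : (pt (M - ρ) : EuclideanSpace ℝ (Fin 2)) 1 = 0 := rfl
            rw [e0, e1]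
            push_neg at hhalf
            nlinarith
        by_cases hki : k = i
        · subst hki
          have hx := (pt_mem_closedBall (hr k)).1 hk
          rw [hzi] at hx
          apply hcase
          constructor
          · calc m ≤ q k 0 - r k := min_le_left _ _
              _ ≤ x := by nlinarith [sq_nonneg (x - q k 0 + r k)]
          · calc x ≤ q k 0 + r k := by nlinarith [sq_nonneg (x - q k 0 - r k)]
              _ ≤ M := le_max_left _ _
        · by_cases hkj : k = j
          · subst hkj
            have hx := (pt_mem_closedBall (hr k)).1 hk
            rw [hzj] at hx
            apply hcase
            constructor
            · calc m ≤ q k 0 - r k := min_le_right _ _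
                _ ≤ x := by nlinarith [sq_nonneg (x - q k 0 + r k)]
            · calc x ≤ q k 0 + r k := by nlinarith [sq_nonneg (x - q k 0 - r k)]
                _ ≤ M := le_max_right _ _
          · refine ⟨k, ?_⟩
            have e1 : q' k = q k := by simp [hq', hki, hkj]
            have e2 : r' k = r k := by simp [hr', hki, hkj]
            rw [e1, e2]; exact hk
      have hsum := hopt q' r' hr'nn hcov'
      have hlt : r' i ^2 + r' j ^2 < r i ^2 + r j ^2 := by
        rw [hr'i, hr'j]
        nlinarith [sq_nonneg (r i - r j), hρ, hMm, hρdef]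
      have hsame : ∀ k, k ≠ i → k ≠ j → r' k = r k := by
        intro k h1 h2; simp [hr', h1, h2]
      have := replace_two i j hij r r' hsame hlt
      linarith
    · -- at least one center off the axis; project both onto the axis
      set wi := Real.sqrt (r i ^2 - (q i 1)^2) with hwi
      set wj := Real.sqrt (r j ^2 - (q j 1)^2) with hwj
      set q' : Fin n → EuclideanSpace ℝ (Fin 2) :=
        fun k => if k = i then pt (q i 0) else if k = j then pt (q j 0) else q k with hq'
      set r' : Fin n → ℝ := fun k => if k = i then wi else if k = j then wj else r k with hr'
      have hr'nn : ∀ k, 0 ≤ r' k := by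
        intro k; simp only [hr']; split_ifs
        exacts [Real.sqrt_nonneg _, Real.sqrt_nonneg _, hr k]
      have hr'i : r' i = wi := by simp [hr']
      have hr'j : r' j = wj := by simp [hr', hij.symm]
      have hcov' : ∀ x : ℝ, a ≤ x → x ≤ a + L →
          ∃ k, pt x ∈ Metric.closedBall (q' k) (r' k) := by
        intro x hx1 hx2
        obtain ⟨k, hk⟩ := hcov x hx1 hx2
        by_cases hki : k = i
        · subst hki
          refine ⟨k, ?_⟩
          have e1 : q' k = pt (q k 0) := by simp [hq']
          rw [e1, hr'i, pt_mem_closedBall (Real.sqrt_nonneg _)]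
          have e0 : (pt (q k 0) : EuclideanSpace ℝ (Fin 2)) 0 = q k 0 := rfl
          have e2 : (pt (q k 0) : EuclideanSpace ℝ (Fin 2)) 1 = 0 := rfl
          rw [e0, e2]
          have hx := (pt_mem_closedBall (hr k)).1 hk
          have h1 := abs_le_w hx
          rw [← hwi] at h1
          nlinarith [abs_nonneg (x - q k 0), sq_abs (x - q k 0)]
        · by_cases hkj : k = j
          · subst hkj
            refine ⟨k, ?_⟩
            have e1 : q' k = pt (q k 0) := by simp [hq', hij.symm]
            rw [e1, hr'j, pt_mem_closedBall (Real.sqrt_nonneg _)]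
            have e0 : (pt (q k 0) : EuclideanSpace ℝ (Fin 2)) 0 = q k 0 := rfl
            have e2 : (pt (q k 0) : EuclideanSpace ℝ (Fin 2)) 1 = 0 := rfl
            rw [e0, e2]
            have hx := (pt_mem_closedBall (hr k)).1 hk
            have h1 := abs_le_w hx
            rw [← hwj] at h1
            nlinarith [abs_nonneg (x - q k 0), sq_abs (x - q k 0)]
          · refine ⟨k, ?_⟩
            have e1 : q' k = q k := by simp [hq', hki, hkj]
            have e2 : r' k = r k := by simp [hr', hki, hkj]
            rw [e1, e2]; exact hk
      have hsum := hopt q' r' hr'nn hcov'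
      have hlt : r' i ^2 + r' j ^2 < r i ^2 + r j ^2 := by
        rw [hr'i, hr'j, hwi, hwj]
        rcases not_and_or.1 hzero with h | h
        · have h1 := wsq_lt hri h
          have h2 := wsq_le (r := r j) (h := q j 1)
          linarith
        · have h1 := wsq_le (r := r i) (h := q i 1)
          have h2 := wsq_lt hrj h
          linarith
      have hsame : ∀ k, k ≠ i → k ≠ j → r' k = r k := by
        intro k h1 h2; simp [hr', h1, h2]
      have := replace_two i j hij r r' hsame hlt
      linarith
end

section
/- In any set of pairwise non-overlapping disks centered at collinear points p_1 < ... < p_n with radii r_1, ..., r_n (so r_i + r_{i+1} ≤ p_{i+1} − p_i for all i), the total squared radius sum Σ r_i^2 is at most (Σ_{i=1}^{n−1} (p_{i+1} − p_i))^2 = (p_n − p_1)^2. Moreover, modifying any feasible solution by setting r_1 = p_2 − p_1 and r_2 = 0 (keeping other radii) yields another feasible solution with total squared radius sum at least as large. -/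
theorem stmt12 (n : ℕ) (hn : 3 ≤ n) (p r : ℕ → ℝ)
    (hp : ∀ i, i + 1 < n → p i < p (i + 1))
    (hr : ∀ i, i < n → 0 ≤ r i)
    (hfeas : ∀ i, i + 1 < n → r i + r (i + 1) ≤ p (i + 1) - p i) :
    (∑ i ∈ Finset.range n, r i ^ 2 ≤ (p (n - 1) - p 0) ^ 2) ∧
    (∀ r' : ℕ → ℝ,
      r' = (fun j => if j = 0 then p 1 - p 0 else if j = 1 then 0 else r j) →
      (∀ i, i < n → 0 ≤ r' i) ∧
      (∀ i, i + 1 < n → r' i + r' (i + 1) ≤ p (i + 1) - p i) ∧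
      ∑ i ∈ Finset.range n, r i ^ 2 ≤ ∑ i ∈ Finset.range n, r' i ^ 2) := by
  -- Key lemma: partial sums are bounded by p (k+1) - p 0
  have key : ∀ k, k + 1 < n → (∑ i ∈ Finset.range (k + 2), r i) ≤ p (k + 1) - p 0 := by
    intro k
    induction k with
    | zero =>
      intro h
      have := hfeas 0 h
      simp [Finset.sum_range_succ]
      linarith
    | succ m ih =>
      intro h
      have h1 : m + 1 < n := by omega
      have := ih h1
      have h2 := hfeas (m + 1) h
      have h3 := hr (m + 1) (by omega)
      rw [Finset.sum_range_succ]
      have : r (m + 2) ≤ p (m + 2) - p (m + 1) := by linarith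
      linarith
  have hsum : (∑ i ∈ Finset.range n, r i) ≤ p (n - 1) - p 0 := by
    have h1 : n - 2 + 1 < n := by omega
    have := key (n - 2) h1
    have h2 : n - 2 + 2 = n := by omega
    have h3 : n - 2 + 1 = n - 1 := by omega
    rw [h2, h3] at this
    exact this
  have hnonneg : ∀ i ∈ Finset.range n, 0 ≤ r i := fun i hi => hr i (Finset.mem_range.mp hi)
  constructor
  · have hsq : ∑ i ∈ Finset.range n, r i ^ 2 ≤ (∑ i ∈ Finset.range n, r i) ^ 2 := by
      calc ∑ i ∈ Finset.range n, r i ^ 2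
          ≤ ∑ i ∈ Finset.range n, r i * (∑ j ∈ Finset.range n, r j) := by
            apply Finset.sum_le_sum
            intro i hi
            rw [sq]
            apply mul_le_mul_of_nonneg_left _ (hnonneg i hi)
            exact Finset.single_le_sum hnonneg hi
        _ = (∑ i ∈ Finset.range n, r i) ^ 2 := by rw [← Finset.sum_mul, sq]
    have hS : 0 ≤ ∑ i ∈ Finset.range n, r i := Finset.sum_nonneg hnonneg
    calc ∑ i ∈ Finset.range n, r i ^ 2 ≤ (∑ i ∈ Finset.range n, r i) ^ 2 := hsq
      _ ≤ (p (n - 1) - p 0) ^ 2 := by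
          apply pow_le_pow_left₀ hS hsum
  · intro r' hr'
    subst hr'
    have hgap0 : 0 ≤ p 1 - p 0 := le_of_lt (sub_pos.mpr (hp 0 (by omega)))
    refine ⟨?_, ?_, ?_⟩
    · intro i hi
      by_cases h0 : i = 0
      · simp [h0, hgap0]
      by_cases h1 : i = 1
      · simp [h0, h1]
      · simp only [h0, h1, if_false]
        exact hr i hi
    · intro i hi
      match i with
      | 0 => simp
      | 1 =>
        simp only [show (1:ℕ) ≠ 0 by decide, show (2:ℕ) ≠ 0 by decide,
          show (2:ℕ) ≠ 1 by decide, if_false, if_true, reduceIte]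
        have h2 := hfeas 1 hi
        have := hr 1 (by omega)
        linarith
      | (m + 2) =>
        simp only [show m + 2 ≠ 0 by omega, show m + 2 ≠ 1 by omega,
          show m + 3 ≠ 0 by omega, show m + 3 ≠ 1 by omega, if_false]
        exact hfeas (m + 2) hi
    · have hsplit : ∀ f : ℕ → ℝ, ∑ i ∈ Finset.range n, f i
          = f 0 + f 1 + ∑ i ∈ Finset.Ico 2 n, f i := by
        intro f
        rw [Finset.range_eq_Ico, ← Finset.sum_Ico_consecutive (m := 0) (n := 2) (k := n) _ (by omega) (by omega)]
        have : (Finset.Ico 0 2 : Finset ℕ) = {0, 1} := by decide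
        rw [this]
        simp
      rw [hsplit, hsplit]
      have heq : ∑ i ∈ Finset.Ico 2 n,
          (if i = 0 then p 1 - p 0 else if i = 1 then 0 else r i) ^ 2
          = ∑ i ∈ Finset.Ico 2 n, r i ^ 2 := by
        apply Finset.sum_congr rfl
        intro i hi
        have : 2 ≤ i := (Finset.mem_Ico.mp hi).1
        simp [show i ≠ 0 by omega, show i ≠ 1 by omega]
      rw [heq]
      simp only [if_true, show (1:ℕ) ≠ 0 by decide, if_false, reduceIte]
      have h01 := hfeas 0 (by omega)
      have h0 := hr 0 (by omega)
      have h1 := hr 1 (by omega)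
      nlinarith [sq_nonneg (r 0), sq_nonneg (r 1), sq_nonneg (r 0 + r 1)]
end

section
/- In an optimal (maximum total squared-radius) assignment of non-overlapping disks centered at collinear points p_1 < ... < p_n (constraints r_i + r_{i+1} ≤ p_{i+1} − p_i, r_i ≥ 0), any disk D_i with 0 < r_i, 1 < i < n, that is neither full (r_i = min(p_i − p_{i−1}, p_{i+1} − p_i)) nor zero satisfies r_i < max(r_{i−1}, r_{i+1}). -/
set_option maxHeartbeats 1000000 in
theorem stmt17 (n : ℕ) (hn : 3 ≤ n) (p r : ℕ → ℝ)
    (hp : ∀ k, k + 1 < n → p k < p (k + 1))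
    (hr : ∀ k, k < n → 0 ≤ r k)
    (hfeas : ∀ k, k + 1 < n → r k + r (k + 1) ≤ p (k + 1) - p k)
    (hopt : ∀ r' : ℕ → ℝ, (∀ k, k < n → 0 ≤ r' k) →
      (∀ k, k + 1 < n → r' k + r' (k + 1) ≤ p (k + 1) - p k) →
      ∑ k ∈ Finset.range n, r' k ^ 2 ≤ ∑ k ∈ Finset.range n, r k ^ 2)
    (i : ℕ) (hi0 : 0 < i) (hi1 : i < n - 1)
    (hpos : 0 < r i)
    (hnotfull1 : r i ≠ p i - p (i - 1)) (hnotfull2 : r i ≠ p (i + 1) - p i) :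
    r i < max (r (i - 1)) (r (i + 1)) := by
  by_contra hcon
  push_neg at hcon
  obtain ⟨j, rfl⟩ : ∃ j, i = j + 1 := ⟨i - 1, by omega⟩
  simp only [Nat.add_sub_cancel, max_le_iff] at hcon hnotfull1
  obtain ⟨ha, hc⟩ := hcon
  have hj2 : j + 2 < n := by omega
  have hj1 : j + 1 < n := by omega
  have hjn : j < n := by omega
  have ha0 : 0 ≤ r j := hr j hjn
  have hb0 : 0 ≤ r (j+1) := hr _ hj1
  have hc0 : 0 ≤ r (j+2) := hr _ hj2
  have hL : r j + r (j+1) ≤ p (j+1) - p j := hfeas j hj1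
  have hR : r (j+1) + r (j+2) ≤ p (j+2) - p (j+1) := by
    have := hfeas (j+1) hj2
    simpa using this
  have hbL : r (j+1) < p (j+1) - p j := lt_of_le_of_ne (by linarith) hnotfull1
  have hbR : r (j+1) < p (j+2) - p (j+1) := by
    have h2 : r (j+1) ≤ p (j+2) - p (j+1) := by linarith
    exact lt_of_le_of_ne h2 (by simpa using hnotfull2)
  have key : ∀ x y z : ℝ, 0 ≤ x → 0 ≤ y → 0 ≤ z →
      x + y ≤ p (j+1) - p j → y + z ≤ p (j+2) - p (j+1) →
      x ≤ r j → z ≤ r (j+2) →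
      x^2 + y^2 + z^2 ≤ r j ^2 + r (j+1)^2 + r (j+2)^2 := by
    intro x y z hx hy hz hxy hyz hxa hzc
    set r' : ℕ → ℝ := fun k => if k = j then x else if k = j+1 then y
      else if k = j+2 then z else r k with hr'
    have vj : r' j = x := by simp [hr']
    have vj1 : r' (j+1) = y := by
      rw [hr']; simp only
      rw [if_neg (by omega)]; simp
    have vj2 : r' (j+2) = z := by
      rw [hr']; simp only
      rw [if_neg (by omega), if_neg (by omega)]; simp
    have vother : ∀ k, k ≠ j → k ≠ j+1 → k ≠ j+2 → r' k = r k := by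
      intro k h1 h2 h3
      rw [hr']; simp only
      rw [if_neg h1, if_neg h2, if_neg h3]
    have h1 : ∀ k, k < n → 0 ≤ r' k := by
      intro k hk
      rw [hr']; simp only
      split_ifs <;> first | assumption | exact hr k hk
    have h2 : ∀ k, k + 1 < n → r' k + r' (k + 1) ≤ p (k + 1) - p k := by
      intro k hk
      rcases eq_or_ne k j with rfl | h0
      · rw [vj, vj1]; exact hxy
      rcases eq_or_ne k (j+1) with rfl | h1'
      · rw [vj1, show j+1+1 = j+2 from rfl, vj2]; exact hyz
      rcases eq_or_ne k (j+2) with rfl | h2'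
      · rw [vj2, vother (j+2+1) (by omega) (by omega) (by omega)]
        have := hfeas (j+2) hk
        linarith
      rcases eq_or_ne (k+1) j with hk1 | h3
      · rw [vother k h0 h1' h2', hk1, vj]
        have := hfeas k hk
        rw [hk1] at this
        linarith
      · rw [vother k h0 h1' h2',
          vother (k+1) h3 (by omega) (by omega)]
        exact hfeas k hk
    have hsum := hopt r' h1 h2
    have hsub : ({j, j+1, j+2} : Finset ℕ) ⊆ Finset.range n := by
      intro k hk
      simp only [Finset.mem_insert, Finset.mem_singleton] at hk
      simp only [Finset.mem_range]
      omega
    rw [← Finset.sum_sdiff hsub (f := fun k => r' k ^ 2),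
        ← Finset.sum_sdiff hsub (f := fun k => r k ^ 2)] at hsum
    have heq : ∑ k ∈ (Finset.range n \ {j, j+1, j+2}), r' k ^ 2
        = ∑ k ∈ (Finset.range n \ {j, j+1, j+2}), r k ^ 2 := by
      refine Finset.sum_congr rfl ?_
      intro k hk
      simp only [Finset.mem_sdiff, Finset.mem_insert, Finset.mem_singleton] at hk
      push_neg at hk
      rw [vother k hk.2.1 hk.2.2.1 hk.2.2.2]
    have hset : ({j, j+1, j+2} : Finset ℕ) = insert j (insert (j+1) {j+2}) := rfl
    have t1 : ∑ k ∈ ({j, j+1, j+2} : Finset ℕ), r' k ^ 2 = x^2 + y^2 + z^2 := by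
      rw [hset, Finset.sum_insert (by simp),
        Finset.sum_insert (by simp), Finset.sum_singleton, vj, vj1, vj2]
      ring
    have t2 : ∑ k ∈ ({j, j+1, j+2} : Finset ℕ), r k ^ 2
        = r j ^2 + r (j+1)^2 + r (j+2)^2 := by
      rw [hset, Finset.sum_insert (by simp),
        Finset.sum_insert (by simp), Finset.sum_singleton]
      ring
    rw [t1, t2, heq] at hsum
    linarith
  by_cases hcpos : 0 < r (j+2)
  · by_cases hca : r (j+2) ≤ r j
    · -- move all of r (j+2) onto r (j+1), compensate on the left
      have hk := key (r j - r (j+2)) (r (j+1) + r (j+2)) 0 (by linarith) (by linarith)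
        le_rfl (by linarith) (by linarith) (by linarith) hc0
      nlinarith [hk, hcpos, ha]
    · push_neg at hca
      by_cases hapos : 0 < r j
      · -- move all of r j onto r (j+1), compensate on the right
        have hk := key 0 (r (j+1) + r j) (r (j+2) - r j) le_rfl (by linarith)
          (by linarith) (by linarith) (by linarith) ha0 (by linarith)
        nlinarith [hk, hapos, hc]
      · have ha0' : r j = 0 := le_antisymm (not_lt.mp hapos) ha0
        set s := min (r (j+2)) (p (j+1) - p j - r (j+1)) with hs
        have hs0 : 0 < s := lt_min hcpos (by linarith)
        have hs1 : s ≤ r (j+2) := min_le_left _ _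
        have hs2 : s ≤ p (j+1) - p j - r (j+1) := min_le_right _ _
        have hk := key 0 (r (j+1) + s) (r (j+2) - s) le_rfl (by linarith)
          (by linarith) (by linarith) (by linarith) ha0 (by linarith)
        nlinarith [hk, hs0, hc, ha0']
  · have hc0' : r (j+2) = 0 := le_antisymm (not_lt.mp hcpos) hc0
    by_cases hapos : 0 < r j
    · set s := min (r j) (p (j+2) - p (j+1) - r (j+1)) with hs
      have hs0 : 0 < s := lt_min hapos (by linarith)
      have hs1 : s ≤ r j := min_le_left _ _
      have hs2 : s ≤ p (j+2) - p (j+1) - r (j+1) := min_le_right _ _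
      have hk := key (r j - s) (r (j+1) + s) 0 (by linarith) (by linarith)
        le_rfl (by linarith) (by linarith) (by linarith) hc0
      nlinarith [hk, hs0, ha, hc0']
    · have ha0' : r j = 0 := le_antisymm (not_lt.mp hapos) ha0
      set e := min (p (j+1) - p j - r (j+1)) (p (j+2) - p (j+1) - r (j+1)) with he'
      have he : 0 < e := lt_min (by linarith) (by linarith)
      have he1 : e ≤ p (j+1) - p j - r (j+1) := min_le_left _ _
      have he2 : e ≤ p (j+2) - p (j+1) - r (j+1) := min_le_right _ _
      have hk := key 0 (r (j+1) + e) 0 le_rfl (by linarith) le_rfl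
        (by linarith) (by linarith) ha0 hc0
      rw [ha0', hc0'] at hk
      nlinarith [hk, he, hb0]
end

section
/- For any n ≥ 1 and interval [a,b] with points p_1 = a < p_2 < ... < p_n = b, the minimum total area over point-interval coverages (n disks covering [a,b] where disk i contains p_i) is at least π(b−a)^2/(4n), with equality attained if and only if the equal-disk (unit-disk) covering is valid, i.e., p_i ∈ [a + (i−1)(b−a)/n, a + i(b−a)/n] for all i. -/
set_option maxHeartbeats 1000000

/-- A point-interval coverage for points `p` on the interval `[a,b]`:
`n` closed disks (given by centers `q` and radii `rad`) covering `[a,b]`,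
with the `i`-th disk containing the point `p i`. -/
def IsPIC (n : ℕ) (a b : ℝ) (p : Fin n → ℝ)
    (q : Fin n → EuclideanSpace ℝ (Fin 2)) (rad : Fin n → ℝ) : Prop :=
  (∀ i, 0 ≤ rad i) ∧
  (∀ x : ℝ, x ∈ Set.Icc a b → ∃ i, pt x ∈ Metric.closedBall (q i) (rad i)) ∧
  (∀ i, pt (p i) ∈ Metric.closedBall (q i) (rad i))

lemma pt_apply0 (x : ℝ) : pt x 0 = x := rfl
lemma pt_apply1 (x : ℝ) : pt x 1 = 0 := rfl

lemma abs_sub_le_dist_pt (x : ℝ) (q : EuclideanSpace ℝ (Fin 2)) :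
    |x - q 0| ≤ dist (pt x) q := by
  rw [EuclideanSpace.dist_eq, ← Real.sqrt_sq_eq_abs]
  apply Real.sqrt_le_sqrt
  rw [Fin.sum_univ_two, pt_apply0, pt_apply1, Real.dist_eq, Real.dist_eq, sq_abs, sq_abs]
  nlinarith [sq_nonneg (0 - q 1)]

lemma dist_pt_pt (x y : ℝ) : dist (pt x) (pt y) = |x - y| := by
  rw [EuclideanSpace.dist_eq, Fin.sum_univ_two, pt_apply0, pt_apply1, pt_apply0, pt_apply1]
  rw [Real.dist_eq, Real.dist_eq, sq_abs, sq_abs, ← Real.sqrt_sq_eq_abs]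
  norm_num

open MeasureTheory in
lemma cover_length {u v : ℝ} {ι : Type*} (s : Finset ι) (f g : ι → ℝ)
    (h : Set.Ioo u v ⊆ ⋃ i ∈ s, Set.Icc (f i) (g i)) :
    v - u ≤ ∑ i ∈ s, max (g i - f i) 0 := by
  have h0 : 0 ≤ ∑ i ∈ s, max (g i - f i) 0 :=
    Finset.sum_nonneg (fun i _ => le_max_right _ _)
  rcases le_or_gt v u with hvu | huv
  · linarith
  have h1 : volume (Set.Ioo u v) ≤ volume (⋃ i ∈ s, Set.Icc (f i) (g i)) := measure_mono h
  have h2 : volume (⋃ i ∈ s, Set.Icc (f i) (g i)) ≤ ∑ i ∈ s, volume (Set.Icc (f i) (g i)) :=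
    measure_biUnion_finset_le s _
  rw [Real.volume_Ioo] at h1
  have h3 : ∑ i ∈ s, volume (Set.Icc (f i) (g i))
      = ENNReal.ofReal (∑ i ∈ s, max (g i - f i) 0) := by
    rw [ENNReal.ofReal_sum_of_nonneg (fun i _ => le_max_right _ _)]
    refine Finset.sum_congr rfl fun i _ => ?_
    rw [Real.volume_Icc]
    rcases le_or_gt (g i - f i) 0 with h' | h'
    · rw [max_eq_right h', ENNReal.ofReal_eq_zero.mpr h', ENNReal.ofReal_zero]
    · rw [max_eq_left h'.le]
  rw [h3] at h2
  exact (ENNReal.ofReal_le_ofReal_iff h0).mp (h1.trans h2)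

lemma sum_two_rad (n : ℕ) (a b : ℝ) (p : Fin n → ℝ)
    (q : Fin n → EuclideanSpace ℝ (Fin 2)) (rad : Fin n → ℝ)
    (h : IsPIC n a b p q rad) : b - a ≤ ∑ i, 2 * rad i := by
  obtain ⟨hr, hcov, _⟩ := h
  have hsub : Set.Ioo a b ⊆
      ⋃ i ∈ Finset.univ, Set.Icc (q i 0 - rad i) (q i 0 + rad i) := by
    intro x hx
    obtain ⟨i, hi⟩ := hcov x ⟨hx.1.le, hx.2.le⟩
    rw [Metric.mem_closedBall] at hi
    have h2 : |x - q i 0| ≤ rad i := (abs_sub_le_dist_pt x (q i)).trans hi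
    rw [abs_sub_le_iff] at h2
    simp only [Set.mem_iUnion, Set.mem_Icc]
    exact ⟨i, Finset.mem_univ i, by linarith [h2.1, h2.2], by linarith [h2.1, h2.2]⟩
  have hcl := cover_length Finset.univ _ _ hsub
  calc b - a ≤ ∑ i, max (q i 0 + rad i - (q i 0 - rad i)) 0 := hcl
    _ = ∑ i, 2 * rad i := Finset.sum_congr rfl fun i _ => by
        rw [show q i 0 + rad i - (q i 0 - rad i) = 2 * rad i by ring,
          max_eq_left (by linarith [hr i])]

theorem stmt18 (n : ℕ) (hn : 0 < n) (a b : ℝ) (hab : a < b)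
    (p : Fin n → ℝ) (hmono : StrictMono p)
    (hp0 : p ⟨0, hn⟩ = a) (hpn : p ⟨n - 1, by omega⟩ = b) :
    (∀ (q : Fin n → EuclideanSpace ℝ (Fin 2)) (rad : Fin n → ℝ),
      IsPIC n a b p q rad →
      Real.pi * (b - a) ^ 2 / (4 * n) ≤ Real.pi * ∑ i, rad i ^ 2) ∧
    ((∃ (q : Fin n → EuclideanSpace ℝ (Fin 2)) (rad : Fin n → ℝ),
        IsPIC n a b p q rad ∧
        Real.pi * ∑ i, rad i ^ 2 = Real.pi * (b - a) ^ 2 / (4 * n)) ↔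
      (∀ i : Fin n, p i ∈ Set.Icc (a + ((i : ℕ) : ℝ) * ((b - a) / n))
        (a + (((i : ℕ) : ℝ) + 1) * ((b - a) / n)))) := by
  have hn' : (0:ℝ) < n := Nat.cast_pos.mpr hn
  set D : ℝ := (b - a) / n with hD
  have hd : 0 < D := div_pos (by linarith) hn'
  have hnd : (n:ℝ) * D = b - a := by rw [hD]; field_simp
  have hpab : ∀ i : Fin n, a ≤ p i ∧ p i ≤ b := by
    intro i
    constructor
    · rw [← hp0]; exact hmono.monotone (by simp [Fin.le_def])
    · rw [← hpn]; exact hmono.monotone (by simp [Fin.le_def]; omega)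
  have lower : ∀ (q : Fin n → EuclideanSpace ℝ (Fin 2)) (rad : Fin n → ℝ),
      IsPIC n a b p q rad → (b-a)^2/(4*n) ≤ ∑ i, rad i ^ 2 := by
    intro q rad h
    have h1 : b - a ≤ ∑ i, 2 * rad i := sum_two_rad n a b p q rad h
    have h1' : b - a ≤ 2 * ∑ i, rad i := by
      rw [Finset.mul_sum]; exact h1
    have h2 : (∑ i, rad i)^2 ≤ (n:ℝ) * ∑ i, rad i^2 := by
      have := sq_sum_le_card_mul_sum_sq (s := (Finset.univ : Finset (Fin n))) (f := rad)
      simpa using this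
    rw [div_le_iff₀ (by positivity)]
    nlinarith [sq_nonneg (∑ i, rad i), h1', h2]
  refine ⟨?_, ?_, ?_⟩
  · intro q rad h
    have hl := lower q rad h
    have hπ := Real.pi_pos
    rw [mul_div_assoc]
    exact mul_le_mul_of_nonneg_left hl hπ.le
  · -- forward direction of the iff
    rintro ⟨q, rad, hpic, heq⟩ i
    have hπ := Real.pi_pos
    have hsum : ∑ i, rad i ^ 2 = (b-a)^2/(4*n) := by
      have := heq
      rw [mul_div_assoc] at this
      exact mul_left_cancel₀ (ne_of_gt hπ) this
    obtain ⟨hr, hcov, hmem⟩ := hpic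
    have h1' : b - a ≤ 2 * ∑ j, rad j := by
      have := sum_two_rad n a b p q rad ⟨hr, hcov, hmem⟩
      rw [Finset.mul_sum]; exact this
    -- all radii equal D/2
    have hzero : ∑ j, (rad j - D/2)^2 = 0 := by
      have hexp : ∑ j, (rad j - D/2)^2
          = (∑ j, rad j^2) - D * (∑ j, rad j) + (n:ℝ) * (D/2)^2 := by
        rw [Finset.sum_congr rfl (fun j _ =>
          show (rad j - D/2)^2 = rad j^2 - D * rad j + (D/2)^2 by ring)]
        rw [Finset.sum_add_distrib, Finset.sum_sub_distrib, ← Finset.mul_sum,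
          Finset.sum_const, Finset.card_univ, Fintype.card_fin, nsmul_eq_mul]
      have hge : 0 ≤ ∑ j, (rad j - D/2)^2 :=
        Finset.sum_nonneg fun j _ => sq_nonneg _
      have hsum' : ∑ j, rad j ^ 2 = (n:ℝ) * (D/2)^2 := by
        rw [hsum]; field_simp [hD]; linear_combination (-4 * ((b - a) + n * D)) * hnd
      nlinarith [hexp, hge, hsum', h1', hd, hnd]
    have hradeq : ∀ j, rad j = D / 2 := by
      intro j
      have := (Finset.sum_eq_zero_iff_of_nonneg (fun j _ => sq_nonneg (rad j - D/2))).mp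
        hzero j (Finset.mem_univ j)
      have := pow_eq_zero_iff (n := 2) (by norm_num) |>.mp this
      linarith [sub_eq_zero.mp this]
    set c : Fin n → ℝ := fun j => q j 0 with hc
    have hxcov : ∀ x ∈ Set.Icc a b, ∃ j, c j - D/2 ≤ x ∧ x ≤ c j + D/2 := by
      intro x hx
      obtain ⟨j, hj⟩ := hcov x hx
      rw [Metric.mem_closedBall, hradeq j] at hj
      have h2 : |x - c j| ≤ D/2 := (abs_sub_le_dist_pt x (q j)).trans hj
      rw [abs_sub_le_iff] at h2
      exact ⟨j, by linarith [h2.1, h2.2], by linarith [h2.1, h2.2]⟩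
    have hpmem0 : ∀ j, c j - D/2 ≤ p j ∧ p j ≤ c j + D/2 := by
      intro j
      have hj := hmem j
      rw [Metric.mem_closedBall, hradeq j] at hj
      have h2 : |p j - c j| ≤ D/2 := (abs_sub_le_dist_pt (p j) (q j)).trans hj
      rw [abs_sub_le_iff] at h2
      exact ⟨by linarith [h2.1, h2.2], by linarith [h2.1, h2.2]⟩
    set sA : Fin n → Finset (Fin n) := fun i => Finset.univ.filter (fun j => c j < c i) with hsA
    set sB : Fin n → Finset (Fin n) := fun i => Finset.univ.filter (fun j => c i < c j) with hsB
    have keyA : ∀ i, c i - D/2 - a ≤ ((sA i).card : ℝ) * D := by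
      intro i
      have hsub : Set.Ioo a (c i - D/2) ⊆
          ⋃ j ∈ sA i, Set.Icc (c j - D/2) (c j + D/2) := by
        intro x hx
        have hxb : x ≤ b := le_trans hx.2.le (by linarith [(hpmem0 i).1, (hpab i).2])
        obtain ⟨j, hj1, hj2⟩ := hxcov x ⟨hx.1.le, hxb⟩
        have hlt : c j < c i := by linarith [hx.2]
        simp only [Set.mem_iUnion, Set.mem_Icc, hsA, Finset.mem_filter]
        exact ⟨j, ⟨Finset.mem_univ j, hlt⟩, hj1, hj2⟩
      have hcl := cover_length (sA i) _ _ hsub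
      calc c i - D/2 - a ≤ ∑ j ∈ sA i, max (c j + D/2 - (c j - D/2)) 0 := hcl
        _ = ∑ j ∈ sA i, D := Finset.sum_congr rfl fun j _ => by
            rw [show c j + D/2 - (c j - D/2) = D by ring, max_eq_left hd.le]
        _ = ((sA i).card : ℝ) * D := by rw [Finset.sum_const, nsmul_eq_mul]
    have keyB : ∀ i, b - (c i + D/2) ≤ ((sB i).card : ℝ) * D := by
      intro i
      have hsub : Set.Ioo (c i + D/2) b ⊆
          ⋃ j ∈ sB i, Set.Icc (c j - D/2) (c j + D/2) := by
        intro x hx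
        have hxa : a ≤ x := le_trans (by linarith [(hpmem0 i).2, (hpab i).1]) hx.1.le
        obtain ⟨j, hj1, hj2⟩ := hxcov x ⟨hxa, hx.2.le⟩
        have hlt : c i < c j := by linarith [hx.1]
        simp only [Set.mem_iUnion, Set.mem_Icc, hsB, Finset.mem_filter]
        exact ⟨j, ⟨Finset.mem_univ j, hlt⟩, hj1, hj2⟩
      have hcl := cover_length (sB i) _ _ hsub
      calc b - (c i + D/2) ≤ ∑ j ∈ sB i, max (c j + D/2 - (c j - D/2)) 0 := hcl
        _ = ∑ j ∈ sB i, D := Finset.sum_congr rfl fun j _ => by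
            rw [show c j + D/2 - (c j - D/2) = D by ring, max_eq_left hd.le]
        _ = ((sB i).card : ℝ) * D := by rw [Finset.sum_const, nsmul_eq_mul]
    have hdisj : ∀ i, Disjoint (sA i) (sB i) := by
      intro i
      rw [Finset.disjoint_left]
      intro j hj1 hj2
      simp only [hsA, hsB, Finset.mem_filter] at hj1 hj2
      linarith [hj1.2, hj2.2]
    have hsubE : ∀ i, sA i ∪ sB i ⊆ Finset.univ.erase i := by
      intro i j hj
      rw [Finset.mem_union] at hj
      rw [Finset.mem_erase]
      refine ⟨?_, Finset.mem_univ j⟩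
      rintro rfl
      rcases hj with hj | hj <;>
        · simp only [hsA, hsB, Finset.mem_filter] at hj; linarith [hj.2]
    have hcardE : (Finset.univ.erase i).card = n - 1 := by
      rw [Finset.card_erase_of_mem (Finset.mem_univ i), Finset.card_univ, Fintype.card_fin]
    have hcards : ∀ i : Fin n, (sA i).card + (sB i).card ≤ n - 1 := by
      intro i
      have h1 : (sA i ∪ sB i).card = (sA i).card + (sB i).card :=
        Finset.card_union_of_disjoint (hdisj i)
      have h2 := Finset.card_le_card (hsubE i)
      rw [h1, Finset.card_erase_of_mem (Finset.mem_univ i), Finset.card_univ,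
        Fintype.card_fin] at h2
      exact h2
    -- extract equalities
    have hciA : ∀ i, c i - D/2 - a = ((sA i).card : ℝ) * D ∧
        b - (c i + D/2) = ((sB i).card : ℝ) * D := by
      intro i
      have hA := keyA i
      have hB := keyB i
      have hABn : ((sA i).card : ℝ) + ((sB i).card : ℝ) ≤ (n:ℝ) - 1 := by
        have := hcards i
        have h1 : ((sA i).card + (sB i).card : ℕ) ≤ n - 1 := this
        have h2 : (((sA i).card + (sB i).card : ℕ) : ℝ) ≤ ((n - 1 : ℕ) : ℝ) :=
          Nat.cast_le.mpr h1
        push_cast [Nat.cast_sub hn] at h2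
        linarith
      have hmul : (((sA i).card : ℝ) + ((sB i).card : ℝ)) * D ≤ ((n:ℝ) - 1) * D :=
        mul_le_mul_of_nonneg_right hABn hd.le
      constructor <;> nlinarith [hA, hB, hmul, hnd]
    -- no ties
    have hcardeq : ∀ i : Fin n, (sA i).card + (sB i).card = n - 1 := by
      intro i
      have h1 := (hciA i).1
      have h2 := (hciA i).2
      have : (((sA i).card : ℝ) + ((sB i).card : ℝ)) * D = ((n:ℝ) - 1) * D := by
        nlinarith [h1, h2, hnd]
      have h3 : ((sA i).card : ℝ) + ((sB i).card : ℝ) = (n:ℝ) - 1 :=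
        mul_right_cancel₀ (ne_of_gt hd) this
      have h4 : (((sA i).card + (sB i).card : ℕ) : ℝ) = ((n - 1 : ℕ) : ℝ) := by
        push_cast [Nat.cast_sub hn]
        linarith
      exact_mod_cast h4
    have hne : ∀ i j : Fin n, i ≠ j → c i ≠ c j := by
      intro i j hij hceq
      have hunion : sA i ∪ sB i = Finset.univ.erase i := by
        apply Finset.eq_of_subset_of_card_le (hsubE i)
        rw [Finset.card_erase_of_mem (Finset.mem_univ i), Finset.card_univ, Fintype.card_fin,
          Finset.card_union_of_disjoint (hdisj i), hcardeq i]
      have hjmem : j ∈ Finset.univ.erase i := Finset.mem_erase.mpr ⟨hij.symm, Finset.mem_univ j⟩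
      rw [← hunion, Finset.mem_union] at hjmem
      rcases hjmem with hj | hj <;>
        · simp only [hsA, hsB, Finset.mem_filter] at hj; linarith [hj.2]
    set k : Fin n → ℕ := fun i => (sA i).card with hk
    have hkub : ∀ i, k i ≤ n - 1 := by
      intro i
      have h := hcardeq i
      simp only [hk]
      omega
    have hcik : ∀ i, c i = a + (k i : ℝ) * D + D/2 := by
      intro i
      have := (hciA i).1
      simp only [hk]
      linarith
    have hkinj : Function.Injective k := by
      intro i j hkeq
      by_contra hij
      exact hne i j hij (by rw [hcik i, hcik j, hkeq])
    have hpk : ∀ i, a + (k i : ℝ) * D ≤ p i ∧ p i ≤ a + (k i : ℝ) * D + D := by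
      intro i
      have h1 := (hpmem0 i).1
      have h2 := (hpmem0 i).2
      rw [hcik i] at h1 h2
      exact ⟨by linarith, by linarith⟩
    -- k is strictly monotone
    have hkmono : ∀ i j : Fin n, i < j → k i < k j := by
      intro i j hij
      rcases lt_trichotomy (k i) (k j) with h | h | h
      · exact h
      · exact absurd (hkinj h) (ne_of_lt hij)
      · exfalso
        have hsucc : (k j : ℝ) + 1 ≤ (k i : ℝ) := by exact_mod_cast Nat.succ_le_of_lt h
        have hp1 := (hpk i).1
        have hp2 := (hpk j).2
        have := hmono hij
        nlinarith [hd]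
    -- K : Fin n → Fin n is the identity
    have hkid : ∀ i : Fin n, k i = (i : ℕ) := by
      set K : Fin n → Fin n := fun i => ⟨k i, by have := hkub i; omega⟩ with hK
      have hKmono : StrictMono K := fun i j hij => by
        simp only [hK, Fin.mk_lt_mk]
        exact hkmono i j hij
      have hKinj : Function.Injective K := hKmono.injective
      have hKsurj : Function.Surjective K := Finite.injective_iff_surjective.mp hKinj
      have hrange : Set.range K = Set.range (id : Fin n → Fin n) := by
        rw [Set.range_id, Set.range_eq_univ]
        exact hKsurj
      have hwf : WellFoundedLT (Fin n) := Finite.to_wellFoundedLT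
      have : K = id := (hKmono.range_inj strictMono_id).mp hrange
      intro i
      have := congrFun this i
      simpa [hK] using congrArg Fin.val this
    rw [Set.mem_Icc]
    have h1 := (hpk i).1
    have h2 := (hpk i).2
    rw [hkid i] at h1 h2
    have hr : ((i : ℕ) : ℝ) * D + D = (((i : ℕ) : ℝ) + 1) * D := by ring
    exact ⟨by linarith, by linarith⟩
  · -- construction direction
    intro hyp
    refine ⟨fun i => pt (a + ((i : ℕ) : ℝ) * D + D/2), fun _ => D/2, ⟨fun i => by positivity, ?_, ?_⟩, ?_⟩
    · -- coverage
      intro x hx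
      rw [Set.mem_Icc] at hx
      set t : ℝ := (x - a) / D with ht
      have ht0 : 0 ≤ t := div_nonneg (by linarith [hx.1]) hd.le
      have hfl0 : 0 ≤ ⌊t⌋ := Int.floor_nonneg.mpr ht0
      set m : ℕ := min (⌊t⌋.toNat) (n - 1) with hm
      have hmn : m < n := by omega
      refine ⟨⟨m, hmn⟩, ?_⟩
      rw [Metric.mem_closedBall, dist_pt_pt, abs_le]
      have hgoal : a + (m : ℝ) * D ≤ x ∧ x ≤ a + ((m : ℝ) + 1) * D → 
          x - (a + ((⟨m, hmn⟩ : Fin n) : ℕ) * D + D/2) ≤ D/2 ∧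
          -(D/2) ≤ x - (a + ((⟨m, hmn⟩ : Fin n) : ℕ) * D + D/2) := by
        intro ⟨u1, u2⟩
        constructor <;> simp only [Fin.val_mk] <;> nlinarith
      refine And.symm (hgoal ?_)
      rcases le_or_gt (⌊t⌋.toNat) (n - 1) with hcase | hcase
      · have hmm : m = ⌊t⌋.toNat := min_eq_left hcase
        have hcast : ((m : ℕ) : ℝ) = (⌊t⌋ : ℝ) := by
          rw [hmm]
          exact_mod_cast congrArg (fun z : ℤ => (z : ℝ)) (Int.toNat_of_nonneg hfl0)
        have hle : ((m : ℕ) : ℝ) ≤ t := by rw [hcast]; exact Int.floor_le t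
        have hlt : t < (m : ℝ) + 1 := by rw [hcast]; exact Int.lt_floor_add_one t
        constructor
        · have : (m : ℝ) * D ≤ t * D := mul_le_mul_of_nonneg_right hle hd.le
          rw [ht] at this
          rw [div_mul_cancel₀ _ (ne_of_gt hd)] at this
          linarith
        · have : t * D ≤ ((m : ℝ) + 1) * D := mul_le_mul_of_nonneg_right hlt.le hd.le
          rw [ht, div_mul_cancel₀ _ (ne_of_gt hd)] at this
          linarith
      · have hmm : m = n - 1 := min_eq_right hcase.le
        have hfl : (n : ℤ) - 1 ≤ ⌊t⌋ := by omega
        have hle : ((n : ℝ) - 1) ≤ t := by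
          have := Int.le_floor.mp hfl
          push_cast at this
          linarith
        have hcast : ((m : ℕ) : ℝ) = (n : ℝ) - 1 := by
          rw [hmm]
          push_cast [Nat.cast_sub hn]
          ring
        constructor
        · have : ((n : ℝ) - 1) * D ≤ t * D := mul_le_mul_of_nonneg_right hle hd.le
          rw [ht, div_mul_cancel₀ _ (ne_of_gt hd)] at this
          rw [hcast]
          linarith
        · rw [hcast]
          have : ((n:ℝ) - 1 + 1) * D = b - a := by rw [← hnd]; ring
          rw [this]
          linarith [hx.2]
    · -- p i in ball i
      intro i
      rw [Metric.mem_closedBall, dist_pt_pt, abs_le]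
      have h1 := (hyp i).1
      have h2 := (hyp i).2
      constructor <;> nlinarith [h1, h2]
    · -- total area
      rw [Finset.sum_const, Finset.card_univ, Fintype.card_fin, nsmul_eq_mul, hD]
      rw [mul_div_assoc]
      congr 1
      field_simp
      ring
end
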